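/- Let σ:[0,∞)→P be a piecewise constant switching signal with average dwell time τ_a > 0 and chatter bound N_0 ≥ 1, i.e., the number of discontinuities N_σ(t,s) on every interval (s,t] satisfies N_σ(t,s) ≤ N_0 + (t−s)/τ_a. Fix τ ∈ (0, τ_a), an initial time τ_0 ≥ 0, and an integer N > (τ_a/(τ_a−τ))·(N_0 − τ/τ_a). Then there exists T with 0 ≤ T ≤ (N−1)τ such that σ has no discontinuity on the interval (τ_0+T, τ_0+T+τ]. -/
import Mathlib


set_option maxHeartbeats 1000000 in
/-- Average dwell time lemma. `S ⊆ ℝ` is the (locally finite) set of switching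
times (discontinuities) of the switching signal, and the average-dwell-time
condition says that the number of switching times in every interval `(s,t]`
(`t > s ≥ 0`) is at most `N₀ + (t-s)/τ_a`.  Fix `τ ∈ (0, τ_a)`, `τ₀ ≥ 0` and an
integer `N > (τ_a/(τ_a - τ))·(N₀ - τ/τ_a)`.  Then there is `T ∈ [0, (N-1)τ]`
with no switching time in `(τ₀+T, τ₀+T+τ]`. -/
theorem average_dwell_time_switch_free_interval
    (S : Set ℝ) (τa N0 τ τ0 : ℝ) (N : ℕ)
    (hτa : 0 < τa) (hN0 : 1 ≤ N0)
    (hfin : ∀ s t : ℝ, (S ∩ Set.Ioc s t).Finite)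
    (hADT : ∀ s t : ℝ, 0 ≤ s → s < t →
      ((S ∩ Set.Ioc s t).ncard : ℝ) ≤ N0 + (t - s) / τa)
    (hτ0 : 0 ≤ τ) (hττa : 0 < τ) (hτlt : τ < τa) (hτ00 : 0 ≤ τ0)
    (hN : τa / (τa - τ) * (N0 - τ / τa) < (N : ℝ)) :
    ∃ T : ℝ, 0 ≤ T ∧ T ≤ ((N : ℝ) - 1) * τ ∧
      S ∩ Set.Ioc (τ0 + T) (τ0 + T + τ) = ∅ := by
  by_contra hcon
  push_neg at hcon
  have hτaτ : (0:ℝ) < τa - τ := by linarith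
  have hτdiv : τ / τa < 1 := (div_lt_one hτa).2 hτlt
  have hNpos : (0:ℝ) < N := by
    have h1 : 0 < τa / (τa - τ) * (N0 - τ / τa) :=
      mul_pos (div_pos hτa hτaτ) (by linarith)
    linarith
  have hNpos' : 0 < N := by exact_mod_cast hNpos
  have hN1 : 1 ≤ N := hNpos'
  have hN1' : (1:ℝ) ≤ (N:ℝ) := by exact_mod_cast hN1
  -- key inequality
  rw [div_mul_eq_mul_div, div_lt_iff₀ hτaτ] at hN
  have hcanc : τa * (τ / τa) = τ := by field_simp
  have hkey : N0 * τa + ((N:ℝ) - 1) * τ < (N:ℝ) * τa := by nlinarith [hN, hcanc]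
  -- existence of switch in every τ-window
  have key : ∀ T : ℝ, (0 ≤ T ∧ T ≤ ((N:ℝ) - 1) * τ) →
      ∃ x, x ∈ S ∧ τ0 + T < x ∧ x ≤ τ0 + T + τ := by
    rintro T ⟨h1, h2⟩
    obtain ⟨x, hx1, hx2, hx3⟩ := hcon T h1 h2
    exact ⟨x, hx1, hx2, hx3⟩
  classical
  obtain ⟨pick, hpick⟩ : ∃ pick : ℝ → ℝ, ∀ T : ℝ, 0 ≤ T → T ≤ ((N:ℝ) - 1) * τ →
      pick T ∈ S ∧ τ0 + T < pick T ∧ pick T ≤ τ0 + T + τ := by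
    refine ⟨fun T => if h : 0 ≤ T ∧ T ≤ ((N:ℝ) - 1) * τ then (key T h).choose else 0, ?_⟩
    intro T h1 h2
    have h : 0 ≤ T ∧ T ≤ ((N:ℝ) - 1) * τ := ⟨h1, h2⟩
    simp only [dif_pos h]
    exact (key T h).choose_spec
  obtain ⟨F, hF0, hFsucc⟩ : ∃ F : ℕ → ℝ, F 0 = pick 0 ∧ ∀ n, F (n + 1) = pick (F n - τ0) :=
    ⟨fun n => Nat.rec (pick 0) (fun _ x => pick (x - τ0)) n, rfl, fun n => rfl⟩
  -- bounds invariant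
  have hbnd : ∀ n, n < N → F n ∈ S ∧ τ0 < F n ∧ F n ≤ τ0 + ((n:ℝ) + 1) * τ := by
    intro n
    induction n with
    | zero =>
      intro _
      have h := hpick 0 le_rfl (mul_nonneg (by linarith) hτ0)
      rw [hF0]
      refine ⟨h.1, by linarith [h.2.1], by push_cast; linarith [h.2.2]⟩
    | succ n ih =>
      intro hn
      have hn' : n < N := Nat.lt_of_succ_lt hn
      obtain ⟨hS, hlo, hhi⟩ := ih hn'
      have hcast : (n:ℝ) + 1 ≤ (N:ℝ) - 1 := by
        have h2 : ((n:ℝ) + 2) ≤ (N:ℝ) := by exact_mod_cast (show n + 2 ≤ N by omega)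
        linarith
      have hT1 : 0 ≤ F n - τ0 := by linarith
      have hT2 : F n - τ0 ≤ ((N:ℝ) - 1) * τ := by nlinarith
      have h := hpick (F n - τ0) hT1 hT2
      rw [hFsucc]
      refine ⟨h.1, by linarith [h.2.1], ?_⟩
      push_cast
      have : pick (F n - τ0) ≤ F n + τ := by linarith [h.2.2]
      linarith
  -- step property
  have hstep : ∀ n, n + 1 < N → F n < F (n + 1) ∧ F (n + 1) ≤ F n + τ := by
    intro n hn
    have hn' : n < N := Nat.lt_of_succ_lt hn
    obtain ⟨hS, hlo, hhi⟩ := hbnd n hn'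
    have hcast : (n:ℝ) + 2 ≤ (N:ℝ) := by exact_mod_cast (show n + 2 ≤ N by omega)
    have hT1 : 0 ≤ F n - τ0 := by linarith
    have hT2 : F n - τ0 ≤ ((N:ℝ) - 1) * τ := by nlinarith
    have h := hpick (F n - τ0) hT1 hT2
    rw [hFsucc]
    exact ⟨by linarith [h.2.1], by linarith [h.2.2]⟩
  have hmono : ∀ m n, m < n → n < N → F m < F n := by
    intro m n hmn hnN
    induction n with
    | zero => omega
    | succ n ih =>
      have h := hstep n hnN
      rcases Nat.lt_succ_iff_lt_or_eq.mp hmn with h' | h'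
      · exact lt_trans (ih h' (Nat.lt_of_succ_lt hnN)) h.1
      · rw [h']; exact h.1
  have hupper : ∀ n, n < N → F n ≤ F 0 + (n:ℝ) * τ := by
    intro n
    induction n with
    | zero => intro _; simp
    | succ n ih =>
      intro hn
      have h := hstep n hn
      have := ih (Nat.lt_of_succ_lt hn)
      push_cast
      linarith
  -- the contradiction
  obtain ⟨hF0S, hF0lo, _⟩ := hbnd 0 (by omega)
  obtain ⟨δ, hδdef⟩ : ∃ δ : ℝ, δ = (N:ℝ) * τa - N0 * τa - ((N:ℝ) - 1) * τ := ⟨_, rfl⟩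
  have hδpos : 0 < δ := by rw [hδdef]; linarith
  obtain ⟨ε, hεdef⟩ : ∃ ε : ℝ, ε = min (F 0 - τ0) (δ / 2) := ⟨_, rfl⟩
  have hεpos : 0 < ε := hεdef ▸ lt_min (by linarith) (by linarith)
  have hε1 : ε ≤ F 0 - τ0 := hεdef ▸ min_le_left _ _
  have hε2 : ε ≤ δ / 2 := hεdef ▸ min_le_right _ _
  obtain ⟨s, hsdef⟩ : ∃ s : ℝ, s = F 0 - ε := ⟨_, rfl⟩
  obtain ⟨t, htdef⟩ : ∃ t : ℝ, t = F 0 + ((N:ℝ) - 1) * τ := ⟨_, rfl⟩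
  have hs0 : 0 ≤ s := by rw [hsdef]; linarith
  have hst : s < t := by
    rw [hsdef, htdef]
    nlinarith
  -- the N points are in S ∩ Ioc s t
  have hFsub : ∀ n, n < N → F n ∈ S ∩ Set.Ioc s t := by
    intro n hn
    obtain ⟨hS, hlo, _⟩ := hbnd n hn
    refine ⟨hS, ?_, ?_⟩
    · rcases Nat.eq_zero_or_pos n with h | h
      · rw [h, hsdef]; linarith
      · have := hmono 0 n h hn
        rw [hsdef]; linarith
    · have h1 := hupper n hn
      have h2 : (n:ℝ) ≤ (N:ℝ) - 1 := by
        have : (n:ℝ) + 1 ≤ (N:ℝ) := by exact_mod_cast hn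
        linarith
      rw [htdef]
      nlinarith [mul_le_mul_of_nonneg_right h2 hτ0]
  have hinj : Set.InjOn F (Finset.range N) := by
    intro a ha b hb hab
    simp only [Finset.coe_range, Set.mem_Iio] at ha hb
    by_contra hne
    rcases lt_or_gt_of_ne hne with h | h
    · exact absurd hab (ne_of_lt (hmono a b h hb))
    · exact absurd hab.symm (ne_of_lt (hmono b a h ha))
  have hcard : ((Finset.range N).image F).card = N := by
    rw [Finset.card_image_of_injOn hinj, Finset.card_range]
  have hsub : ↑((Finset.range N).image F) ⊆ S ∩ Set.Ioc s t := by
    intro x hx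
    simp only [Finset.coe_image, Finset.coe_range, Set.mem_image, Set.mem_Iio] at hx
    obtain ⟨n, hn, rfl⟩ := hx
    exact hFsub n hn
  have hncard : N ≤ (S ∩ Set.Ioc s t).ncard := by
    calc N = (↑((Finset.range N).image F) : Set ℝ).ncard := by
            rw [Set.ncard_coe_finset, hcard]
      _ ≤ (S ∩ Set.Ioc s t).ncard := Set.ncard_le_ncard hsub (hfin s t)
  have hADT' := hADT s t hs0 hst
  have hNle : (N:ℝ) ≤ N0 + (t - s) / τa := le_trans (Nat.cast_le.mpr hncard) hADT'
  have hts : t - s = ((N:ℝ) - 1) * τ + ε := by rw [hsdef, htdef]; ring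
  rw [hts] at hNle
  have : ((N:ℝ) - N0) * τa ≤ ((N:ℝ) - 1) * τ + ε := by
    rw [← le_div_iff₀ hτa]; linarith
  nlinarith
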